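/- Let D = {(x, t, t₁, p) ∈ ℝ⁴ : 0 < x, x < t, x < t₁, 0 < p} and let f : D → ℝ be a continuously differentiable positive function such that for all (x, t, t₁, p) ∈ D and all q ∈ ℝ: (f_x + f_t·p + f_{t₁}·f + f_p·q)/f − 2f/(t₁ − x) + 1/(t₁ − x) = q/p − 2p/(t − x) + 1/(t − x), where subscripts denote partial derivatives of f. Then there exist real constants a, b, not both zero, such that f(x, t, t₁, p)·(a + b·t)(t − x) = (a + b·t₁)(t₁ − x)·p for all (x, t, t₁, p) ∈ D. (Equivalently: every semi-discrete equation t_{1x} = f(x, n, t, t₁, t_x) possessing the n-integral I = t_{xx}/t_x − 2t_x/(t − x) + 1/(t − x) has, for each n, the form t_{1x} = ((1 + t₁M)(t₁ − x))/((1 + tM)(t − x)) t_x up to the projective normalization of the constant M.) -/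

import Mathlib

open Set

/-- If a real function has zero derivative on an open convex set, it is constant there. -/
lemma my_const {s : Set ℝ} (hs : IsOpen s) (hc : Convex ℝ s) {h : ℝ → ℝ}
    (hd : ∀ x ∈ s, HasDerivAt h 0 x) {x y : ℝ} (hx : x ∈ s) (hy : y ∈ s) : h x = h y := by
  refine hc.is_const_of_fderivWithin_eq_zero
    (fun z hz => (hd z hz).differentiableAt.differentiableWithinAt) (fun z hz => ?_) hx hy
  rw [(hd z hz).differentiableAt.fderivWithin (hs.uniqueDiffWithinAt hz),
    (hd z hz).hasFDerivAt.fderiv]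
  ext
  simp

/-- every semi-discrete equation `t_{1x} = f(x,n,t,t₁,t_x)` possessing the
n-integral `I = t_{xx}/t_x - 2t_x/(t-x) + 1/(t-x)` has the form
`t_{1x} = ((1+t₁M)(t₁-x))/((1+tM)(t-x)) t_x` up to projective normalization of `M`. -/
theorem stmt_11 (f : ℝ → ℝ → ℝ → ℝ → ℝ)
    (hf : ContDiffOn ℝ 1 (fun v : ℝ × ℝ × ℝ × ℝ => f v.1 v.2.1 v.2.2.1 v.2.2.2)
      {v : ℝ × ℝ × ℝ × ℝ | 0 < v.1 ∧ v.1 < v.2.1 ∧ v.1 < v.2.2.1 ∧ 0 < v.2.2.2})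
    (hpos : ∀ x t t₁ p : ℝ, 0 < x → x < t → x < t₁ → 0 < p → 0 < f x t t₁ p)
    (hI : ∀ x t t₁ p : ℝ, 0 < x → x < t → x < t₁ → 0 < p → ∀ q : ℝ,
      (deriv (fun x' => f x' t t₁ p) x
        + deriv (fun u => f x u t₁ p) t * p
        + deriv (fun u => f x t u p) t₁ * f x t t₁ p
        + deriv (fun u => f x t t₁ u) p * q) / f x t t₁ p
        - 2 * f x t t₁ p / (t₁ - x) + 1 / (t₁ - x)
      = q / p - 2 * p / (t - x) + 1 / (t - x)) :
    ∃ a b : ℝ, (a, b) ≠ (0, 0) ∧ ∀ x t t₁ p : ℝ, 0 < x → x < t → x < t₁ → 0 < p →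
      f x t t₁ p * ((a + b * t) * (t - x)) = (a + b * t₁) * (t₁ - x) * p := by
  have cancel : ∀ {u v w : ℝ}, w ≠ 0 → (u - v) * w = 0 → u = v := fun hw h =>
    sub_eq_zero.mp ((mul_eq_zero.mp h).resolve_right hw)
  -- openness of the domain
  have hSopen : IsOpen {v : ℝ × ℝ × ℝ × ℝ | 0 < v.1 ∧ v.1 < v.2.1 ∧ v.1 < v.2.2.1 ∧ 0 < v.2.2.2} := by
    refine IsOpen.and (isOpen_lt continuous_const continuous_fst) ?_
    refine IsOpen.and (isOpen_lt continuous_fst (continuous_fst.comp continuous_snd)) ?_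
    refine IsOpen.and (isOpen_lt continuous_fst ((continuous_fst.comp continuous_snd).comp continuous_snd)) ?_
    exact isOpen_lt continuous_const ((continuous_snd.comp continuous_snd).comp continuous_snd)
  have hdiff : ∀ x t t₁ p : ℝ, 0 < x → x < t → x < t₁ → 0 < p →
      DifferentiableAt ℝ (fun v : ℝ×ℝ×ℝ×ℝ => f v.1 v.2.1 v.2.2.1 v.2.2.2) (x,t,t₁,p) :=
    fun x t t₁ p hx ht ht₁ hp => (hf.differentiableOn one_ne_zero).differentiableAt
      (hSopen.mem_nhds ⟨hx, ht, ht₁, hp⟩)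
  -- differentiability in each separate variable
  have hd1 : ∀ x t t₁ p : ℝ, 0 < x → x < t → x < t₁ → 0 < p →
      DifferentiableAt ℝ (fun u => f u t t₁ p) x := by
    intro x t t₁ p hx ht ht₁ hp
    have h1 : DifferentiableAt ℝ (fun u : ℝ => ((u, t, t₁, p) : ℝ×ℝ×ℝ×ℝ)) x :=
      differentiableAt_id.prodMk (differentiableAt_const _)
    exact (hdiff x t t₁ p hx ht ht₁ hp).comp x h1
  have hd2 : ∀ x t t₁ p : ℝ, 0 < x → x < t → x < t₁ → 0 < p →
      DifferentiableAt ℝ (fun u => f x u t₁ p) t := by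
    intro x t t₁ p hx ht ht₁ hp
    have h1 : DifferentiableAt ℝ (fun u : ℝ => ((x, u, t₁, p) : ℝ×ℝ×ℝ×ℝ)) t :=
      (differentiableAt_const _).prodMk (differentiableAt_id.prodMk (differentiableAt_const _))
    exact (hdiff x t t₁ p hx ht ht₁ hp).comp t h1
  have hd3 : ∀ x t t₁ p : ℝ, 0 < x → x < t → x < t₁ → 0 < p →
      DifferentiableAt ℝ (fun u => f x t u p) t₁ := by
    intro x t t₁ p hx ht ht₁ hp
    have h1 : DifferentiableAt ℝ (fun u : ℝ => ((x, t, u, p) : ℝ×ℝ×ℝ×ℝ)) t₁ :=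
      (differentiableAt_const _).prodMk ((differentiableAt_const _).prodMk
        (differentiableAt_id.prodMk (differentiableAt_const _)))
    exact (hdiff x t t₁ p hx ht ht₁ hp).comp t₁ h1
  have hd4 : ∀ x t t₁ p : ℝ, 0 < x → x < t → x < t₁ → 0 < p →
      DifferentiableAt ℝ (fun u => f x t t₁ u) p := by
    intro x t t₁ p hx ht ht₁ hp
    have h1 : DifferentiableAt ℝ (fun u : ℝ => ((x, t, t₁, u) : ℝ×ℝ×ℝ×ℝ)) p :=
      (differentiableAt_const _).prodMk ((differentiableAt_const _).prodMk
        ((differentiableAt_const _).prodMk differentiableAt_id))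
    exact ((hdiff x t t₁ p hx ht ht₁ hp).comp p h1 :)
  -- STEP 1 : f x t t₁ p = p * g x t t₁ with g x t t₁ := f x t t₁ 1
  set g : ℝ → ℝ → ℝ → ℝ := fun x t t₁ => f x t t₁ 1 with hgdef
  have hfp : ∀ x t t₁ p : ℝ, 0 < x → x < t → x < t₁ → 0 < p →
      f x t t₁ p = p * g x t t₁ := by
    have key : ∀ x t t₁ p : ℝ, 0 < x → x < t → x < t₁ → 0 < p →
        deriv (fun u => f x t t₁ u) p * p = f x t t₁ p := by
      intro x t t₁ p hx ht ht₁ hp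
      have hfne := (hpos x t t₁ p hx ht ht₁ hp).ne'
      have e1 := hI x t t₁ p hx ht ht₁ hp p
      have e0 := hI x t t₁ p hx ht ht₁ hp 0
      have d : (deriv (fun x' => f x' t t₁ p) x + deriv (fun u => f x u t₁ p) t * p
            + deriv (fun u => f x t u p) t₁ * f x t t₁ p
            + deriv (fun u => f x t t₁ u) p * p) / f x t t₁ p
          - (deriv (fun x' => f x' t t₁ p) x + deriv (fun u => f x u t₁ p) t * p
            + deriv (fun u => f x t u p) t₁ * f x t t₁ p
            + deriv (fun u => f x t t₁ u) p * 0) / f x t t₁ p = p / p - 0 / p := by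
        linarith
      rw [div_sub_div_same, div_self hp.ne', zero_div, sub_zero] at d
      have h := (div_eq_one_iff_eq hfne).mp d
      linear_combination h
    intro x t t₁ p hx ht ht₁ hp
    have hc : ∀ u ∈ Ioi (0:ℝ), HasDerivAt (fun u => f x t t₁ u / u) 0 u := by
      intro u hu
      have hu0 : (0:ℝ) < u := hu
      have h1 : HasDerivAt (fun u => f x t t₁ u) (deriv (fun u => f x t t₁ u) u) u :=
        (hd4 x t t₁ u hx ht ht₁ hu0).hasDerivAt
      have h2 := h1.div (hasDerivAt_id u) hu0.ne'
      simp only [id_eq] at h2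
      have hz : (deriv (fun u => f x t t₁ u) u * u - f x t t₁ u * 1) / u ^ 2 = 0 := by
        rw [key x t t₁ u hx ht ht₁ hu0]; ring
      rwa [hz] at h2
    have hcst := my_const isOpen_Ioi (convex_Ioi 0) hc (mem_Ioi.mpr hp) (mem_Ioi.mpr one_pos)
    have hp' : p ≠ 0 := hp.ne'
    field_simp at hcst
    rw [hgdef]
    linarith
  have hgpos : ∀ x t t₁ : ℝ, 0 < x → x < t → x < t₁ → 0 < g x t t₁ :=
    fun x t t₁ hx ht ht₁ => hpos x t t₁ 1 hx ht ht₁ one_pos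
  -- derivative transfer
  have hDx : ∀ x t t₁ p : ℝ, 0 < x → x < t → x < t₁ → 0 < p →
      deriv (fun u => f u t t₁ p) x = p * deriv (fun u => g u t t₁) x := by
    intro x t t₁ p hx ht ht₁ hp
    have hev : (fun u => f u t t₁ p) =ᶠ[nhds x] fun u => p * g u t t₁ := by
      filter_upwards [Ioo_mem_nhds hx (lt_min ht ht₁)] with u hu
      exact hfp u t t₁ p hu.1 (lt_of_lt_of_le hu.2 (min_le_left _ _))
        (lt_of_lt_of_le hu.2 (min_le_right _ _)) hp
    rw [hev.deriv_eq, deriv_const_mul _ (hd1 x t t₁ 1 hx ht ht₁ one_pos)]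
  have hDt : ∀ x t t₁ p : ℝ, 0 < x → x < t → x < t₁ → 0 < p →
      deriv (fun u => f x u t₁ p) t = p * deriv (fun u => g x u t₁) t := by
    intro x t t₁ p hx ht ht₁ hp
    have hev : (fun u => f x u t₁ p) =ᶠ[nhds t] fun u => p * g x u t₁ := by
      filter_upwards [Ioi_mem_nhds ht] with u hu
      exact hfp x u t₁ p hx hu ht₁ hp
    rw [hev.deriv_eq, deriv_const_mul _ (hd2 x t t₁ 1 hx ht ht₁ one_pos)]
  have hDt₁ : ∀ x t t₁ p : ℝ, 0 < x → x < t → x < t₁ → 0 < p →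
      deriv (fun u => f x t u p) t₁ = p * deriv (fun u => g x t u) t₁ := by
    intro x t t₁ p hx ht ht₁ hp
    have hev : (fun u => f x t u p) =ᶠ[nhds t₁] fun u => p * g x t u := by
      filter_upwards [Ioi_mem_nhds ht₁] with u hu
      exact hfp x t u p hx ht hu hp
    rw [hev.deriv_eq, deriv_const_mul _ (hd3 x t t₁ 1 hx ht ht₁ one_pos)]
  have hDp : ∀ x t t₁ p : ℝ, 0 < x → x < t → x < t₁ → 0 < p →
      deriv (fun u => f x t t₁ u) p = g x t t₁ := by
    intro x t t₁ p hx ht ht₁ hp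
    have hev : (fun u => f x t t₁ u) =ᶠ[nhds p] fun u => u * g x t t₁ := by
      filter_upwards [Ioi_mem_nhds hp] with u hu
      exact hfp x t t₁ u hx ht ht₁ hu
    rw [hev.deriv_eq]
    have : HasDerivAt (fun u : ℝ => u * g x t t₁) (g x t t₁) p := by
      simpa using (hasDerivAt_id p).mul_const (g x t t₁)
    exact this.deriv
  -- STEP 2 : the two PDEs for g
  have hAB : ∀ x t t₁ : ℝ, 0 < x → x < t → x < t₁ →
      deriv (fun u => g u t t₁) x * ((t-x) * (t₁-x))
          = g x t t₁ * (t₁-x) - g x t t₁ * (t-x)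
      ∧ (deriv (fun u => g x u t₁) t + deriv (fun u => g x t u) t₁ * g x t t₁)
            * ((t-x) * (t₁-x))
          = 2 * (g x t t₁)^2 * (t-x) - 2 * (g x t t₁) * (t₁-x) := by
    intro x t t₁ hx ht ht₁
    have hg0 := (hgpos x t t₁ hx ht ht₁).ne'
    have htx : t - x ≠ 0 := sub_ne_zero.mpr ht.ne'
    have ht1x : t₁ - x ≠ 0 := sub_ne_zero.mpr ht₁.ne'
    have e1 := hI x t t₁ 1 hx ht ht₁ one_pos 0
    have e2 := hI x t t₁ 2 hx ht ht₁ two_pos 0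
    rw [hDx x t t₁ 1 hx ht ht₁ one_pos, hDt x t t₁ 1 hx ht ht₁ one_pos,
      hDt₁ x t t₁ 1 hx ht ht₁ one_pos, hDp x t t₁ 1 hx ht ht₁ one_pos,
      hfp x t t₁ 1 hx ht ht₁ one_pos] at e1
    rw [hDx x t t₁ 2 hx ht ht₁ two_pos, hDt x t t₁ 2 hx ht ht₁ two_pos,
      hDt₁ x t t₁ 2 hx ht ht₁ two_pos, hDp x t t₁ 2 hx ht ht₁ two_pos,
      hfp x t t₁ 2 hx ht ht₁ two_pos] at e2
    field_simp at e1 e2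
    constructor
    · exact cancel (mul_ne_zero ht1x htx) (by linear_combination (t₁-x) * (t-x) * (2 * e1 - e2 / 2))
    · exact cancel (mul_ne_zero ht1x htx) (by linear_combination (t₁-x) * (t-x) * (e2 / 2 - e1))
  -- STEP 3 : φ t t₁, independent of x
  set φ : ℝ → ℝ → ℝ := fun t t₁ =>
    g (min t t₁ / 2) t t₁ * (t - min t t₁ / 2) / (t₁ - min t t₁ / 2) with hφdef
  have hφx : ∀ t t₁ : ℝ, 0 < t → 0 < t₁ → ∀ x, 0 < x → x < t → x < t₁ →
      g x t t₁ * (t - x) / (t₁ - x) = φ t t₁ := by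
    intro t t₁ ht ht₁ x hx hxt hxt₁
    have hmin : (0:ℝ) < min t t₁ := lt_min ht ht₁
    have hder : ∀ y ∈ Ioo (0:ℝ) (min t t₁),
        HasDerivAt (fun u => g u t t₁ * (t - u) / (t₁ - u)) 0 y := by
      intro y hy
      have hy0 : 0 < y := hy.1
      have hyt : y < t := lt_of_lt_of_le hy.2 (min_le_left _ _)
      have hyt₁ : y < t₁ := lt_of_lt_of_le hy.2 (min_le_right _ _)
      have hty : t - y ≠ 0 := sub_ne_zero.mpr hyt.ne'
      have ht1y : t₁ - y ≠ 0 := sub_ne_zero.mpr hyt₁.ne'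
      have hgd : HasDerivAt (fun u => g u t t₁) (deriv (fun u => g u t t₁) y) y :=
        (hd1 y t t₁ 1 hy0 hyt hyt₁ one_pos).hasDerivAt
      have H := (hgd.mul ((hasDerivAt_id y).const_sub t)).div
        ((hasDerivAt_id y).const_sub t₁) ht1y
      simp only [id_eq, Pi.mul_apply] at H
      have hz : ((deriv (fun u => g u t t₁) y * (t - y) + g y t t₁ * -1) * (t₁ - y)
          - g y t t₁ * (t - y) * -1) / (t₁ - y) ^ 2 = 0 := by
        rw [div_eq_zero_iff]; left
        linear_combination (hAB y t t₁ hy0 hyt hyt₁).1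
      rw [hz] at H
      exact H
    have hmem : x ∈ Ioo (0:ℝ) (min t t₁) := ⟨hx, lt_min hxt hxt₁⟩
    have hmem' : min t t₁ / 2 ∈ Ioo (0:ℝ) (min t t₁) := ⟨by linarith, by linarith⟩
    exact my_const isOpen_Ioo (convex_Ioo _ _) hder hmem hmem'
  have hφpos : ∀ t t₁ : ℝ, 0 < t → 0 < t₁ → 0 < φ t t₁ := by
    intro t t₁ ht ht₁
    have hmin : (0:ℝ) < min t t₁ := lt_min ht ht₁
    have h0 : 0 < min t t₁ / 2 := by linarith
    have h1 : min t t₁ / 2 < t := lt_of_lt_of_le (by linarith) (min_le_left t t₁)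
    have h2 : min t t₁ / 2 < t₁ := lt_of_lt_of_le (by linarith) (min_le_right t t₁)
    exact div_pos (mul_pos (hgpos _ t t₁ h0 h1 h2) (by linarith)) (by linarith)
  -- STEP 4 : derivatives of φ and the key relations
  have hφdt : ∀ t t₁ x : ℝ, 0 < x → x < t → x < t₁ →
      HasDerivAt (fun u => φ u t₁)
        ((deriv (fun u => g x u t₁) t * (t - x) + g x t t₁) / (t₁ - x)) t := by
    intro t t₁ x hx hxt hxt₁
    have ht₁ : 0 < t₁ := hx.trans hxt₁
    have hgd : HasDerivAt (fun u => g x u t₁) (deriv (fun u => g x u t₁) t) t :=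
      (hd2 x t t₁ 1 hx hxt hxt₁ one_pos).hasDerivAt
    have H := (hgd.mul ((hasDerivAt_id t).sub_const x)).div_const (t₁ - x)
    simp only [id_eq, mul_one] at H
    refine H.congr_of_eventuallyEq ?_
    filter_upwards [Ioi_mem_nhds hxt] with u hu
    exact (hφx u t₁ (hx.trans hu) ht₁ x hx hu hxt₁).symm
  have hφdt₁ : ∀ t t₁ x : ℝ, 0 < x → x < t → x < t₁ →
      HasDerivAt (fun u => φ t u)
        ((deriv (fun u => g x t u) t₁ * (t - x) * (t₁ - x) - g x t t₁ * (t - x))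
          / (t₁ - x) ^ 2) t₁ := by
    intro t t₁ x hx hxt hxt₁
    have ht : 0 < t := hx.trans hxt
    have hgd : HasDerivAt (fun u => g x t u) (deriv (fun u => g x t u) t₁) t₁ :=
      (hd3 x t t₁ 1 hx hxt hxt₁ one_pos).hasDerivAt
    have H := ((hgd.mul_const (t - x)).div ((hasDerivAt_id t₁).sub_const x)
      (sub_ne_zero.mpr hxt₁.ne'))
    simp only [id_eq, mul_one] at H
    refine H.congr_of_eventuallyEq ?_
    filter_upwards [Ioi_mem_nhds hxt₁] with u hu
    exact (hφx t u ht (hx.trans hu) x hx hxt hu).symm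
  have hstar : ∀ t t₁ x : ℝ, 0 < x → x < t → x < t₁ →
      deriv (fun u => φ u t₁) t * (t - x) + φ t t₁ * deriv (fun u => φ t u) t₁ * (t₁ - x)
        = φ t t₁ ^ 2 - φ t t₁ := by
    intro t t₁ x hx hxt hxt₁
    have ht : 0 < t := hx.trans hxt
    have ht₁ : 0 < t₁ := hx.trans hxt₁
    have hT : t - x ≠ 0 := sub_ne_zero.mpr hxt.ne'
    have hU : t₁ - x ≠ 0 := sub_ne_zero.mpr hxt₁.ne'
    have h1 := (hφdt t t₁ x hx hxt hxt₁).deriv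
    have h2 := (hφdt₁ t t₁ x hx hxt hxt₁).deriv
    have h3 : g x t t₁ * (t - x) = φ t t₁ * (t₁ - x) := by
      rw [← hφx t t₁ ht ht₁ x hx hxt hxt₁]; field_simp
    have hB := (hAB x t t₁ hx hxt hxt₁).2
    rw [h1, h2]
    field_simp
    refine mul_left_cancel₀ hU ?_
    linear_combination (t-x) * hB + (2 * g x t t₁ * (t-x) + φ t t₁ * (t₁-x)
      - (t₁-x) - deriv (fun u => g x t u) t₁ * (t-x) * (t₁-x)) * h3
  have hC0 : ∀ t t₁ : ℝ, 0 < t → 0 < t₁ →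
      deriv (fun u => φ u t₁) t + φ t t₁ * deriv (fun u => φ t u) t₁ = 0 := by
    intro t t₁ ht ht₁
    have hm0 : 0 < min t t₁ := lt_min ht ht₁
    have hmt : min t t₁ ≤ t := min_le_left _ _
    have hmt₁ : min t t₁ ≤ t₁ := min_le_right _ _
    have e1 := hstar t t₁ (min t t₁ / 2) (by linarith) (by linarith) (by linarith)
    have e2 := hstar t t₁ (min t t₁ / 4) (by linarith) (by linarith) (by linarith)
    have h0 := cancel (u := deriv (fun u => φ u t₁) t + φ t t₁ * deriv (fun u => φ t u) t₁)
      (v := 0) (w := min t t₁ / 4 - min t t₁ / 2) (by intro h; nlinarith)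
      (by linear_combination e1 - e2)
    exact h0
  have hE : ∀ t t₁ : ℝ, 0 < t → 0 < t₁ →
      deriv (fun u => φ t u) t₁ * (t₁ - t) = φ t t₁ - 1 := by
    intro t t₁ ht ht₁
    have hm0 : 0 < min t t₁ := lt_min ht ht₁
    have hmt : min t t₁ ≤ t := min_le_left _ _
    have hmt₁ : min t t₁ ≤ t₁ := min_le_right _ _
    have e := hstar t t₁ (min t t₁ / 2) (by linarith) (by linarith) (by linarith)
    have hc := hC0 t t₁ ht ht₁
    have h4 : φ t t₁ * (deriv (fun u => φ t u) t₁ * (t₁ - t) - (φ t t₁ - 1)) = 0 := by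
      linear_combination e - (t - min t t₁ / 2) * hc
    exact sub_eq_zero.mp ((mul_eq_zero.mp h4).resolve_left (hφpos t t₁ ht ht₁).ne')
  have hF : ∀ t t₁ : ℝ, 0 < t → 0 < t₁ →
      deriv (fun u => φ u t₁) t * (t - t₁) = φ t t₁ ^ 2 - φ t t₁ := by
    intro t t₁ ht ht₁
    have hc := hC0 t t₁ ht ht₁
    have he := hE t t₁ ht ht₁
    linear_combination (t - t₁) * hc + φ t t₁ * he
  have hφtt : ∀ t : ℝ, 0 < t → φ t t = 1 := by
    intro t ht
    have := hE t t ht ht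
    simp only [sub_self, mul_zero] at this
    linarith
  -- STEP 5 : φ t t₁ = 1 + C t * (t₁ - t)
  set C : ℝ → ℝ := fun t => deriv (fun u => φ t u) t with hCdef
  have hdiag : ∀ t : ℝ, 0 < t → HasDerivAt (fun u => φ t u) (C t) t := by
    intro t ht
    exact ((hφdt₁ t t (t/2) (by linarith) (by linarith) (by linarith)).differentiableAt).hasDerivAt
  have hφd1 : ∀ t u : ℝ, 0 < t → 0 < u → HasDerivAt (fun v => φ t v) (deriv (fun v => φ t v) u) u := by
    intro t u ht hu
    have hm0 : 0 < min t u := lt_min ht hu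
    have hmt : min t u ≤ t := min_le_left _ _
    have hmu : min t u ≤ u := min_le_right _ _
    exact ((hφdt₁ t u (min t u / 2) (by linarith) (by linarith) (by linarith)).differentiableAt).hasDerivAt
  have hφrep : ∀ t t₁ : ℝ, 0 < t → 0 < t₁ → φ t t₁ = 1 + C t * (t₁ - t) := by
    intro t t₁ ht ht₁
    have hslope : Filter.Tendsto (slope (fun u => φ t u) t) (nhdsWithin t {t}ᶜ) (nhds (C t)) :=
      hasDerivAt_iff_tendsto_slope.mp (hdiag t ht)
    rcases lt_trichotomy t₁ t with hlt | heq | hgt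
    · have hder : ∀ u ∈ Ioo (0:ℝ) t, HasDerivAt (fun v => (φ t v - 1)/(v - t)) 0 u := by
        intro u hu
        have hut : u - t ≠ 0 := ne_of_lt (by linarith [hu.2])
        have H := ((hφd1 t u ht hu.1).sub_const 1).div ((hasDerivAt_id u).sub_const t) hut
        simp only [id_eq, mul_one] at H
        have hz : (deriv (fun v => φ t v) u * (u - t) - (φ t u - 1)) / (u - t) ^ 2 = 0 := by
          rw [div_eq_zero_iff]; left
          linear_combination hE t u ht hu.1
        rwa [hz] at H
      have hcst : ∀ u ∈ Ioo (0:ℝ) t, (φ t u - 1)/(u - t) = (φ t t₁ - 1)/(t₁ - t) :=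
        fun u hu => my_const isOpen_Ioo (convex_Ioo _ _) hder hu ⟨ht₁, hlt⟩
      have hs' : Filter.Tendsto (slope (fun u => φ t u) t) (nhdsWithin t (Iio t)) (nhds (C t)) :=
        hslope.mono_left (nhdsWithin_mono t (fun u hu => ne_of_lt hu))
      have heq' : slope (fun u => φ t u) t =ᶠ[nhdsWithin t (Iio t)]
          fun _ => (φ t t₁ - 1)/(t₁ - t) := by
        filter_upwards [self_mem_nhdsWithin,
          mem_nhdsWithin_of_mem_nhds (Ioi_mem_nhds ht)] with u hu1 hu2
        have hs := hcst u ⟨hu2, hu1⟩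
        rw [slope_def_field, hφtt t ht]
        exact hs
      have h2 : Filter.Tendsto (fun _ : ℝ => (φ t t₁ - 1)/(t₁ - t)) (nhdsWithin t (Iio t))
          (nhds (C t)) := hs'.congr' heq'
      have h3 : (φ t t₁ - 1)/(t₁ - t) = C t := tendsto_nhds_unique tendsto_const_nhds h2
      have h4 := (div_eq_iff (sub_ne_zero.mpr (ne_of_lt hlt))).mp h3
      linarith
    · rw [heq, hφtt t ht]; ring
    · have hder : ∀ u ∈ Ioi t, HasDerivAt (fun v => (φ t v - 1)/(v - t)) 0 u := by
        intro u hu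
        have hu0 : 0 < u := ht.trans hu
        have hut : u - t ≠ 0 := sub_ne_zero.mpr (ne_of_gt hu)
        have H := ((hφd1 t u ht hu0).sub_const 1).div ((hasDerivAt_id u).sub_const t) hut
        simp only [id_eq, mul_one] at H
        have hz : (deriv (fun v => φ t v) u * (u - t) - (φ t u - 1)) / (u - t) ^ 2 = 0 := by
          rw [div_eq_zero_iff]; left
          linear_combination hE t u ht hu0
        rwa [hz] at H
      have hcst : ∀ u ∈ Ioi t, (φ t u - 1)/(u - t) = (φ t t₁ - 1)/(t₁ - t) :=
        fun u hu => my_const isOpen_Ioi (convex_Ioi _) hder hu hgt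
      have hs' : Filter.Tendsto (slope (fun u => φ t u) t) (nhdsWithin t (Ioi t)) (nhds (C t)) :=
        hslope.mono_left (nhdsWithin_mono t (fun u hu => ne_of_gt hu))
      have heq' : slope (fun u => φ t u) t =ᶠ[nhdsWithin t (Ioi t)]
          fun _ => (φ t t₁ - 1)/(t₁ - t) := by
        filter_upwards [self_mem_nhdsWithin] with u hu1
        have hs := hcst u hu1
        rw [slope_def_field, hφtt t ht]
        exact hs
      have h2 : Filter.Tendsto (fun _ : ℝ => (φ t t₁ - 1)/(t₁ - t)) (nhdsWithin t (Ioi t))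
          (nhds (C t)) := hs'.congr' heq'
      have h3 : (φ t t₁ - 1)/(t₁ - t) = C t := tendsto_nhds_unique tendsto_const_nhds h2
      have h4 := (div_eq_iff (sub_ne_zero.mpr (ne_of_gt hgt))).mp h3
      linarith
  -- STEP 6 : C' = -C²
  have hCder : ∀ t : ℝ, 0 < t → HasDerivAt C (-(C t)^2) t := by
    intro t ht
    have h2t : 0 < 2*t := by linarith
    have htt : 2*t - t ≠ 0 := by intro h; linarith [sub_eq_zero.mp h]
    have hev : C =ᶠ[nhds t] fun u => (φ u (2*t) - 1)/(2*t - u) := by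
      filter_upwards [Ioo_mem_nhds (show t/2 < t by linarith) (show t < 3*t/2 by linarith)]
        with u hu
      have hu0 : 0 < u := by linarith [hu.1]
      have hu2t : 2*t - u ≠ 0 := by intro h; have := sub_eq_zero.mp h; linarith [hu.2]
      rw [hφrep u (2*t) hu0 h2t]
      field_simp
      ring
    have hφd : HasDerivAt (fun u => φ u (2*t)) (deriv (fun u => φ u (2*t)) t) t :=
      ((hφdt t (2*t) (t/2) (by linarith) (by linarith) (by linarith)).differentiableAt).hasDerivAt
    have H := (hφd.sub_const 1).div ((hasDerivAt_id t).const_sub (2*t)) htt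
    simp only [id_eq] at H
    have hval : (deriv (fun u => φ u (2*t)) t * (2*t - t) - (φ t (2*t) - 1) * -1)
        / (2*t - t)^2 = -(C t)^2 := by
      have hF' := hF t (2*t) ht h2t
      have hrep := hφrep t (2*t) ht h2t
      have htne : t ≠ 0 := ht.ne'
      rw [div_eq_iff (by positivity)]
      linear_combination (-1) * hF' - (φ t (2*t) - 1 + C t * t) * hrep
    rw [hval] at H
    exact H.congr_of_eventuallyEq hev
  -- STEP 7 : solve the ODE
  have hCcont : ContinuousOn C (Ioi 0) :=
    fun t ht => (hCder t ht).continuousAt.continuousWithinAt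
  have hEder : ∀ t : ℝ, 0 < t → HasDerivAt (fun t => ∫ s in (1:ℝ)..t, C s) (C t) t := by
    intro t ht
    have hsub : uIcc (1:ℝ) t ⊆ Ioi 0 := fun u hu => lt_of_lt_of_le (lt_min one_pos ht) hu.1
    have hint : IntervalIntegrable C MeasureTheory.volume 1 t :=
      (hCcont.mono hsub).intervalIntegrable
    have hmeas : StronglyMeasurableAtFilter C (nhds t) :=
      hCcont.stronglyMeasurableAtFilter isOpen_Ioi t ht
    exact intervalIntegral.integral_hasDerivAt_right hint hmeas (hCder t ht).continuousAt
  set B : ℝ → ℝ := fun t => Real.exp (∫ s in (1:ℝ)..t, C s) with hBdef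
  have hBpos : ∀ t, 0 < B t := fun t => Real.exp_pos _
  have hBder : ∀ t : ℝ, 0 < t → HasDerivAt B (C t * B t) t := by
    intro t ht
    have := (hEder t ht).exp
    rw [mul_comm] at this
    exact this
  set c : ℝ := C 1 with hcdef
  have hB1 : B 1 = 1 := by
    rw [hBdef]; simp [intervalIntegral.integral_same]
  have hCB : ∀ t : ℝ, 0 < t → C t * B t = c := by
    intro t ht
    have hder : ∀ u ∈ Ioi (0:ℝ), HasDerivAt (fun t => C t * B t) 0 u := by
      intro u hu
      have H := (hCder u hu).mul (hBder u hu)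
      have hz : -(C u)^2 * B u + C u * (C u * B u) = 0 := by ring
      rwa [hz] at H
    have := my_const isOpen_Ioi (convex_Ioi 0) hder (mem_Ioi.mpr ht) (mem_Ioi.mpr one_pos)
    rw [this, hB1, mul_one]
  have hBlin : ∀ t : ℝ, 0 < t → B t = 1 + c * (t - 1) := by
    intro t ht
    have hder : ∀ u ∈ Ioi (0:ℝ), HasDerivAt (fun t => B t - c * t) 0 u := by
      intro u hu
      have h1 : HasDerivAt B c u := by
        have := hBder u hu
        rwa [hCB u hu] at this
      have H := h1.sub ((hasDerivAt_id u).const_mul c)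
      simp only [id_eq, mul_one] at H
      have hz : c - c = 0 := by ring
      rwa [hz] at H
    have := my_const isOpen_Ioi (convex_Ioi 0) hder (mem_Ioi.mpr ht) (mem_Ioi.mpr one_pos)
    rw [hB1] at this
    linarith
  have hkey : ∀ t : ℝ, 0 < t → C t * (1 + c * (t - 1)) = c := by
    intro t ht
    rw [← hBlin t ht]
    exact hCB t ht
  -- CONCLUSION
  refine ⟨1 - c, c, ?_, ?_⟩
  · intro h
    rw [Prod.mk.injEq] at h
    rcases h with ⟨h1, h2⟩
    rw [h2] at h1
    norm_num at h1
  · intro x t t₁ p hx ht ht₁ hp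
    have ht0 : 0 < t := hx.trans ht
    have ht₁0 : 0 < t₁ := hx.trans ht₁
    have hU : t₁ - x ≠ 0 := sub_ne_zero.mpr ht₁.ne'
    have h1 := hfp x t t₁ p hx ht ht₁ hp
    have h2 : g x t t₁ * (t - x) = φ t t₁ * (t₁ - x) := by
      rw [← hφx t t₁ ht0 ht₁0 x hx ht ht₁]
      field_simp
    have h3 := hφrep t t₁ ht0 ht₁0
    have h4 := hkey t ht0
    rw [h1]
    linear_combination p * (1 - c + c*t) * h2 + p * (t₁ - x) * (1 - c + c*t) * h3
      + p * (t₁ - x) * (t₁ - t) * h4
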